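/- (Dimension-independent global certificate for rational functions.) Let p and q be polynomials in n variables of degree l ≥ 2, with b_α(q,k,Δ) > 0 for all |α| = k, and let f = p/q with rational Bernstein coefficients b_α(f,k,Δ) = b_α(p,k,Δ)/b_α(q,k,Δ). Suppose f(x) > 0 and q(x) > 0 for all x ∈ Δ, so that p(x) > 0 on Δ with minimum p̲ = min_{x∈Δ} p(x). If k > ( l(l−1)/2 ) · ( max_{|α|=l} |b_α(p,l,Δ)| ) / p̲, then b_α(f,k,Δ) > 0 for all |α| = k; i.e. f satisfies the global certificate of positivity at degree k, by a bound not depending on the dimension n. -/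

import Mathlib

open Finset

noncomputable section

/-- The standard simplex Δ in ℝⁿ. -/
def stdSimp (n : ℕ) : Set (Fin n → ℝ) :=
  {x | (∀ i, 0 ≤ x i) ∧ ∑ i, x i ≤ 1}

/-- Multi-indices α ∈ ℕ^{n+1} with |α| = k. -/
def multIdx (n k : ℕ) : Finset (Fin (n+1) → ℕ) :=
  Finset.Nat.antidiagonalTuple (n+1) k

lemma multIdx_nonempty (n k : ℕ) : (multIdx n k).Nonempty :=
  ⟨fun i => if i = 0 then k else 0, by
    simp [multIdx, Finset.Nat.mem_antidiagonalTuple]⟩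

/-- Bernstein basis polynomial of degree k on the standard simplex. -/
def bern (n k : ℕ) (α : Fin (n+1) → ℕ) (x : Fin n → ℝ) : ℝ :=
  ((k.factorial : ℝ) / ∏ i, ((α i).factorial : ℝ)) *
    (∏ i : Fin n, x i ^ α i.succ) * (1 - ∑ i, x i) ^ α 0

/-- i-th standard unit multi-index. -/
def unitIdx (n : ℕ) (i : Fin (n+1)) : Fin (n+1) → ℕ :=
  fun j => if j = i then 1 else 0

/-- vertex multi-index k·eᵢ -/
def vertIdx (n k : ℕ) (i : Fin (n+1)) : Fin (n+1) → ℕ :=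
  fun j => if j = i then k else 0

/-- second difference -/
def secondDiff (n : ℕ) (b : (Fin (n+1) → ℕ) → ℝ) (γ : Fin (n+1) → ℕ)
    (i j : Fin (n+1)) : ℝ :=
  b (γ + unitIdx n i + unitIdx n (j - 1)) + b (γ + unitIdx n (i - 1) + unitIdx n j)
    - b (γ + unitIdx n (i - 1) + unitIdx n (j - 1)) - b (γ + unitIdx n i + unitIdx n j)

lemma mem_multIdx {n k : ℕ} {α : Fin (n+1) → ℕ} : α ∈ multIdx n k ↔ ∑ i, α i = k := by
  simp [multIdx, Finset.Nat.mem_antidiagonalTuple]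

lemma multIdx_eq_piAntidiag (n k : ℕ) : multIdx n k = piAntidiag univ k := by
  ext f; simp [mem_multIdx, Finset.mem_piAntidiag]

lemma prod_factorial_pos {n : ℕ} (β : Fin (n+1) → ℕ) :
    0 < (∏ i, ((β i).factorial : ℝ)) :=
  Finset.prod_pos fun i _ => by exact_mod_cast (β i).factorial_pos

lemma multinomial_cast {n m : ℕ} (β : Fin (n+1) → ℕ) (hβ : ∑ i, β i = m) :
    (Nat.multinomial univ β : ℝ) = (m.factorial : ℝ) / ∏ i, ((β i).factorial : ℝ) := by
  have h := Nat.multinomial_spec univ β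
  rw [hβ] at h
  have h2 : ((∏ i, (β i).factorial : ℕ) : ℝ) * (Nat.multinomial univ β : ℝ)
      = (m.factorial : ℝ) := by exact_mod_cast h
  push_cast at h2
  field_simp
  linarith [h2]

lemma bern_eq {n k : ℕ} (α : Fin (n+1) → ℕ) (x : Fin n → ℝ) (hα : α ∈ multIdx n k) :
    bern n k α x = (Nat.multinomial univ α : ℝ) *
      ∏ i : Fin (n+1), (Fin.cons (1 - ∑ j, x j) x : Fin (n+1) → ℝ) i ^ α i := by
  rw [multinomial_cast α (mem_multIdx.mp hα), bern]
  have : (∏ i : Fin (n+1), (Fin.cons (1 - ∑ j, x j) x : Fin (n+1) → ℝ) i ^ α i)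
      = (1 - ∑ j, x j) ^ α 0 * ∏ i : Fin n, x i ^ α i.succ := by
    rw [Fin.prod_univ_succ, Fin.cons_zero]
    congr 1
  rw [this]; ring

lemma bern_sum (n m : ℕ) (x : Fin n → ℝ) : ∑ γ ∈ multIdx n m, bern n m γ x = 1 := by
  have : ∑ γ ∈ multIdx n m, bern n m γ x
      = ∑ γ ∈ piAntidiag univ m, (Nat.multinomial univ γ : ℝ) *
        ∏ i : Fin (n+1), (Fin.cons (1 - ∑ j, x j) x : Fin (n+1) → ℝ) i ^ γ i := by
    rw [← multIdx_eq_piAntidiag]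
    exact Finset.sum_congr rfl fun γ hγ => bern_eq γ x hγ
  rw [this, ← Finset.sum_pow_eq_sum_piAntidiag]
  rw [Fin.sum_univ_succ]
  simp

lemma bern_nonneg {n k : ℕ} (α : Fin (n+1) → ℕ) {x : Fin n → ℝ} (hx : x ∈ stdSimp n) :
    0 ≤ bern n k α x := by
  obtain ⟨h1, h2⟩ := hx
  apply mul_nonneg (mul_nonneg (div_nonneg (by positivity) (prod_factorial_pos α).le) _)
  · exact pow_nonneg (by linarith) _
  · exact Finset.prod_nonneg fun i _ => pow_nonneg (h1 i) _

lemma pow_le_descFactorial_add (t : ℕ) : ∀ m : ℕ,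
    t ^ m ≤ t.descFactorial m + m.choose 2 * t ^ (m - 1)
  | 0 => by simp
  | 1 => by simp
  | (m+2) => by
    have ih := pow_le_descFactorial_add t (m+1)
    have h1 : t ^ (m+2) = t * t ^ (m+1) := by ring
    have h2 : t * t ^ (m+1) ≤ t * (t.descFactorial (m+1) + (m+1).choose 2 * t ^ m) :=
      Nat.mul_le_mul_left t (by simpa using ih)
    have h3 : t * t.descFactorial (m+1) ≤ t.descFactorial (m+2) + (m+1) * t ^ (m+1) := by
      have e : t.descFactorial (m+2) = (t - (m+1)) * t.descFactorial (m+1) :=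
        Nat.descFactorial_succ t (m+1)
      calc t * t.descFactorial (m+1) ≤ ((t - (m+1)) + (m+1)) * t.descFactorial (m+1) :=
            Nat.mul_le_mul_right _ le_tsub_add
        _ = (t - (m+1)) * t.descFactorial (m+1) + (m+1) * t.descFactorial (m+1) := by ring
        _ ≤ t.descFactorial (m+2) + (m+1) * t ^ (m+1) := by
            rw [e]
            exact Nat.add_le_add_left (Nat.mul_le_mul_left _ (Nat.descFactorial_le_pow t (m+1))) _
    have h4 : (m+2).choose 2 = (m+1).choose 2 + (m+1) := by
      rw [Nat.choose_succ_succ (m+1) 1, Nat.choose_one_right]; ring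
    calc t ^ (m+2) = t * t ^ (m+1) := h1
      _ ≤ t * t.descFactorial (m+1) + (m+1).choose 2 * (t * t ^ m) := by
          calc t * t ^ (m+1) ≤ t * (t.descFactorial (m+1) + (m+1).choose 2 * t ^ m) := h2
            _ = t * t.descFactorial (m+1) + (m+1).choose 2 * (t * t ^ m) := by ring
      _ ≤ t.descFactorial (m+2) + (m+1) * t ^ (m+1) + (m+1).choose 2 * t ^ (m+1) := by
          have : t * t ^ m = t ^ (m+1) := by ring
          rw [this]; omega
      _ = t.descFactorial (m+2) + (m+2).choose 2 * t ^ (m+1) := by rw [h4]; ring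
      _ = t.descFactorial (m+2) + (m+2).choose 2 * t ^ ((m+2) - 1) := by norm_num

lemma prod_le_prod_add {ι : Type*} [DecidableEq ι] (s : Finset ι) (a b c : ι → ℕ)
    (hba : ∀ i ∈ s, b i ≤ a i) (habc : ∀ i ∈ s, a i ≤ b i + c i) :
    ∏ i ∈ s, a i ≤ ∏ i ∈ s, b i + ∑ i ∈ s, c i * ∏ j ∈ s.erase i, a j := by
  induction s using Finset.induction_on with
  | empty => simp
  | @insert x s hx ih =>
    have hba' : ∀ i ∈ s, b i ≤ a i := fun i hi => hba i (mem_insert_of_mem hi)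
    have habc' : ∀ i ∈ s, a i ≤ b i + c i := fun i hi => habc i (mem_insert_of_mem hi)
    rw [Finset.prod_insert hx, Finset.prod_insert hx, Finset.sum_insert hx,
      Finset.erase_insert hx]
    have step1 : a x * ∏ i ∈ s, a i
        ≤ a x * ∏ i ∈ s, b i + ∑ i ∈ s, c i * (a x * ∏ j ∈ s.erase i, a j) := by
      calc a x * ∏ i ∈ s, a i
          ≤ a x * (∏ i ∈ s, b i + ∑ i ∈ s, c i * ∏ j ∈ s.erase i, a j) :=
            Nat.mul_le_mul_left _ (ih hba' habc')
        _ = a x * ∏ i ∈ s, b i + ∑ i ∈ s, c i * (a x * ∏ j ∈ s.erase i, a j) := by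
            rw [Nat.mul_add, Finset.mul_sum]; congr 1; exact Finset.sum_congr rfl fun i _ => by ring
    have step2 : a x * ∏ i ∈ s, b i ≤ b x * ∏ i ∈ s, b i + c x * ∏ j ∈ s, a j := by
      calc a x * ∏ i ∈ s, b i ≤ (b x + c x) * ∏ i ∈ s, b i :=
            Nat.mul_le_mul_right _ (habc x (mem_insert_self x s))
        _ = b x * ∏ i ∈ s, b i + c x * ∏ i ∈ s, b i := by ring
        _ ≤ b x * ∏ i ∈ s, b i + c x * ∏ j ∈ s, a j :=
            Nat.add_le_add_left (Nat.mul_le_mul_left _ (Finset.prod_le_prod' hba')) _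
    have step3 : ∀ i ∈ s, a x * ∏ j ∈ s.erase i, a j = ∏ j ∈ (insert x s).erase i, a j := by
      intro i hi
      have hix : i ≠ x := fun h => hx (h ▸ hi)
      rw [Finset.erase_insert_of_ne hix.symm, Finset.prod_insert (fun h => hx (Finset.mem_of_mem_erase h))]
    calc a x * ∏ i ∈ s, a i
        ≤ a x * ∏ i ∈ s, b i + ∑ i ∈ s, c i * (a x * ∏ j ∈ s.erase i, a j) := step1
      _ ≤ b x * ∏ i ∈ s, b i + c x * ∏ j ∈ s, a j
            + ∑ i ∈ s, c i * (a x * ∏ j ∈ s.erase i, a j) := by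
          exact Nat.add_le_add_right step2 _
      _ = b x * ∏ i ∈ s, b i + (c x * ∏ j ∈ s, a j
            + ∑ i ∈ s, c i * ∏ j ∈ (insert x s).erase i, a j) := by
          rw [Finset.sum_congr rfl fun i hi => by rw [step3 i hi]]; ring

lemma multinomial_sum_pow {n : ℕ} (m : ℕ) (t : Fin (n+1) → ℕ) :
    ∑ β ∈ multIdx n m, Nat.multinomial univ β * ∏ j, t j ^ β j = (∑ j, t j) ^ m := by
  rw [multIdx_eq_piAntidiag, Finset.sum_pow_eq_sum_piAntidiag univ t m]
  norm_num

lemma multinomial_add_two_real {n l : ℕ} (hl : 2 ≤ l) (i : Fin (n+1))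
    (δ : Fin (n+1) → ℕ) (hδi : δ i = 2) (hδj : ∀ j, j ≠ i → δ j = 0)
    (β : Fin (n+1) → ℕ) (hβ : ∑ j, β j = l - 2) :
    (Nat.multinomial univ (β + δ) : ℝ) * (((β i + 2).choose 2 : ℕ) : ℝ)
      = ((l.choose 2 : ℕ) : ℝ) * (Nat.multinomial univ β : ℝ) := by
  obtain ⟨m, rfl⟩ : ∃ m, l = m + 2 := ⟨l - 2, by omega⟩
  have hβ' : ∑ j, β j = m := by omega
  have h1 : ∑ j, (β + δ) j = m + 2 := by
    simp only [Pi.add_apply]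
    rw [Finset.sum_add_distrib, hβ']
    have : ∑ j, δ j = 2 := by
      rw [← Finset.add_sum_erase univ δ (mem_univ i), hδi]
      have : ∑ j ∈ univ.erase i, δ j = 0 :=
        Finset.sum_eq_zero fun j hj => hδj j (Finset.ne_of_mem_erase hj)
      omega
    omega
  rw [multinomial_cast _ h1, multinomial_cast _ hβ']
  have hprod1 : (∏ j, (((β + δ) j).factorial : ℝ))
      = ((β i + 2).factorial : ℝ) * ∏ j ∈ univ.erase i, ((β j).factorial : ℝ) := by
    rw [← Finset.mul_prod_erase univ _ (mem_univ i)]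
    congr 1
    · simp [Pi.add_apply, hδi]
    · exact Finset.prod_congr rfl fun j hj => by
        simp [Pi.add_apply, hδj j (Finset.ne_of_mem_erase hj)]
  have hprod2 : (∏ j, ((β j).factorial : ℝ))
      = ((β i).factorial : ℝ) * ∏ j ∈ univ.erase i, ((β j).factorial : ℝ) :=
    (Finset.mul_prod_erase univ _ (mem_univ i)).symm
  rw [hprod1, hprod2, Nat.cast_choose_two, Nat.cast_choose_two]
  have e1 : ((m+2).factorial : ℝ) = (m+2) * (m+1) * (m.factorial : ℝ) := by
    rw [Nat.factorial_succ, Nat.factorial_succ]; push_cast; ring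
  have e2 : ((β i + 2).factorial : ℝ) = (β i + 2) * (β i + 1) * ((β i).factorial : ℝ) := by
    rw [Nat.factorial_succ, Nat.factorial_succ]; push_cast; ring
  have hf1 : ((β i).factorial : ℝ) ≠ 0 := by exact_mod_cast (β i).factorial_ne_zero
  have hf2 : (∏ j ∈ univ.erase i, ((β j).factorial : ℝ)) ≠ 0 :=
    ne_of_gt (Finset.prod_pos fun j _ => by exact_mod_cast (β j).factorial_pos)
  rw [e1, e2]
  push_cast
  field_simp
  ring

lemma multinomial_add_two {n l : ℕ} (hl : 2 ≤ l) (i : Fin (n+1))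
    (δ : Fin (n+1) → ℕ) (hδi : δ i = 2) (hδj : ∀ j, j ≠ i → δ j = 0)
    (β : Fin (n+1) → ℕ) (hβ : ∑ j, β j = l - 2) :
    Nat.multinomial univ (β + δ) * (β i + 2).choose 2
      = l.choose 2 * Nat.multinomial univ β := by
  have := multinomial_add_two_real hl i δ hδi hδj β hβ
  exact_mod_cast this

lemma sum_choose2 {n : ℕ} (l : ℕ) (hl : 2 ≤ l) (t : Fin (n+1) → ℕ) (i : Fin (n+1)) :
    ∑ β ∈ multIdx n l, Nat.multinomial univ β *
      ((β i).choose 2 * t i ^ (β i - 1) * ∏ j ∈ univ.erase i, t j ^ β j)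
    = l.choose 2 * (t i * (∑ j, t j) ^ (l - 2)) := by
  obtain ⟨δ, hδi, hδj⟩ : ∃ δ : Fin (n+1) → ℕ, δ i = 2 ∧ ∀ j, j ≠ i → δ j = 0 :=
    ⟨fun j => if j = i then 2 else 0, by simp, fun j hj => by simp [hj]⟩
  have hδsum : ∑ j, δ j = 2 := by
    rw [← Finset.add_sum_erase univ δ (mem_univ i), hδi]
    have : ∑ j ∈ univ.erase i, δ j = 0 :=
      Finset.sum_eq_zero fun j hj => hδj j (Finset.ne_of_mem_erase hj)
    omega
  have himg : (multIdx n (l-2)).image (· + δ) ⊆ multIdx n l := by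
    intro β hβ
    obtain ⟨β', hβ', rfl⟩ := Finset.mem_image.mp hβ
    rw [mem_multIdx]
    simp only [Pi.add_apply]
    rw [Finset.sum_add_distrib, mem_multIdx.mp hβ', hδsum]
    omega
  have hzero : ∀ β ∈ multIdx n l, β ∉ (multIdx n (l-2)).image (· + δ) →
      Nat.multinomial univ β *
        ((β i).choose 2 * t i ^ (β i - 1) * ∏ j ∈ univ.erase i, t j ^ β j) = 0 := by
    intro β hβ hβn
    have hlt : β i < 2 := by
      by_contra h
      push_neg at h
      apply hβn
      refine Finset.mem_image.mpr ⟨Function.update β i (β i - 2), ?_, ?_⟩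
      · rw [mem_multIdx]
        rw [← Finset.add_sum_erase univ _ (mem_univ i)]
        have he : ∑ j ∈ univ.erase i, Function.update β i (β i - 2) j
            = ∑ j ∈ univ.erase i, β j :=
          Finset.sum_congr rfl fun j hj => by
            rw [Function.update_of_ne (Finset.ne_of_mem_erase hj)]
        rw [he, Function.update_self]
        have hβs := mem_multIdx.mp hβ
        rw [← Finset.add_sum_erase univ β (mem_univ i)] at hβs
        omega
      · funext j
        by_cases hj : j = i
        · subst hj
          simp only [Pi.add_apply, Function.update_self, hδi]
          omega
        · simp only [Pi.add_apply, Function.update_of_ne hj, hδj j hj, Nat.add_zero]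
    rw [Nat.choose_eq_zero_of_lt hlt]
    ring
  rw [← Finset.sum_subset himg hzero, Finset.sum_image (fun a _ b _ h => by
    simpa using congrArg (· - δ) h)]
  have hterm : ∀ β' ∈ multIdx n (l-2),
      Nat.multinomial univ (β' + δ) *
        (((β' + δ) i).choose 2 * t i ^ ((β' + δ) i - 1) * ∏ j ∈ univ.erase i, t j ^ (β' + δ) j)
      = l.choose 2 * t i * (Nat.multinomial univ β' * ∏ j, t j ^ β' j) := by
    intro β' hβ'
    have hi : (β' + δ) i = β' i + 2 := by simp [Pi.add_apply, hδi]
    have hj : ∀ j ∈ univ.erase i, t j ^ (β' + δ) j = t j ^ β' j := fun j hjm => by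
      rw [Pi.add_apply, hδj j (Finset.ne_of_mem_erase hjm), Nat.add_zero]
    rw [hi, Finset.prod_congr rfl hj]
    have hmul := multinomial_add_two hl i δ hδi hδj β' (mem_multIdx.mp hβ')
    have hpow : t i ^ (β' i + 2 - 1) = t i * t i ^ β' i := by
      have h21 : β' i + 2 - 1 = β' i + 1 := by omega
      rw [h21, pow_succ]; ring
    rw [hpow]
    have hpr : (∏ j, t j ^ β' j) = t i ^ β' i * ∏ j ∈ univ.erase i, t j ^ β' j :=
      (Finset.mul_prod_erase univ _ (mem_univ i)).symm
    rw [hpr]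
    calc Nat.multinomial univ (β' + δ) *
          ((β' i + 2).choose 2 * (t i * t i ^ β' i) * ∏ x ∈ univ.erase i, t x ^ β' x)
        = Nat.multinomial univ (β' + δ) * (β' i + 2).choose 2 *
            (t i * (t i ^ β' i * ∏ x ∈ univ.erase i, t x ^ β' x)) := by ring
      _ = l.choose 2 * Nat.multinomial univ β' *
            (t i * (t i ^ β' i * ∏ x ∈ univ.erase i, t x ^ β' x)) := by rw [hmul]
      _ = l.choose 2 * t i * (Nat.multinomial univ β' *
            (t i ^ β' i * ∏ x ∈ univ.erase i, t x ^ β' x)) := by ring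
  rw [Finset.sum_congr rfl hterm, ← Finset.mul_sum, multinomial_sum_pow (l-2) t]
  ring

lemma key_nat {n : ℕ} (l : ℕ) (hl : 2 ≤ l) (t : Fin (n+1) → ℕ) :
    ∑ β ∈ multIdx n l, Nat.multinomial univ β * ∏ j, t j ^ β j
      ≤ (∑ β ∈ multIdx n l, Nat.multinomial univ β * ∏ j, (t j).descFactorial (β j))
        + l.choose 2 * (∑ j, t j) ^ (l - 1) := by
  have hβb : ∀ β : Fin (n+1) → ℕ,
      Nat.multinomial univ β * ∏ j, t j ^ β j
        ≤ Nat.multinomial univ β * ∏ j, (t j).descFactorial (β j)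
          + ∑ i, Nat.multinomial univ β *
            ((β i).choose 2 * t i ^ (β i - 1) * ∏ j ∈ univ.erase i, t j ^ β j) := by
    intro β
    have h := prod_le_prod_add univ (fun j => t j ^ β j)
      (fun j => (t j).descFactorial (β j))
      (fun j => (β j).choose 2 * t j ^ (β j - 1))
      (fun j _ => Nat.descFactorial_le_pow (t j) (β j))
      (fun j _ => pow_le_descFactorial_add (t j) (β j))
    calc Nat.multinomial univ β * ∏ j, t j ^ β j
        ≤ Nat.multinomial univ β * (∏ j, (t j).descFactorial (β j)
            + ∑ i, (β i).choose 2 * t i ^ (β i - 1) * ∏ j ∈ univ.erase i, t j ^ β j) :=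
          Nat.mul_le_mul_left _ h
      _ = Nat.multinomial univ β * ∏ j, (t j).descFactorial (β j)
            + ∑ i, Nat.multinomial univ β *
              ((β i).choose 2 * t i ^ (β i - 1) * ∏ j ∈ univ.erase i, t j ^ β j) := by
          rw [Nat.mul_add, Finset.mul_sum]
  calc ∑ β ∈ multIdx n l, Nat.multinomial univ β * ∏ j, t j ^ β j
      ≤ ∑ β ∈ multIdx n l, (Nat.multinomial univ β * ∏ j, (t j).descFactorial (β j)
          + ∑ i, Nat.multinomial univ β *
            ((β i).choose 2 * t i ^ (β i - 1) * ∏ j ∈ univ.erase i, t j ^ β j)) :=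
        Finset.sum_le_sum fun β _ => hβb β
    _ = (∑ β ∈ multIdx n l, Nat.multinomial univ β * ∏ j, (t j).descFactorial (β j))
          + ∑ i, ∑ β ∈ multIdx n l, Nat.multinomial univ β *
            ((β i).choose 2 * t i ^ (β i - 1) * ∏ j ∈ univ.erase i, t j ^ β j) := by
        rw [Finset.sum_add_distrib, Finset.sum_comm]
    _ = (∑ β ∈ multIdx n l, Nat.multinomial univ β * ∏ j, (t j).descFactorial (β j))
          + l.choose 2 * (∑ j, t j) ^ (l - 1) := by
        congr 1
        rw [Finset.sum_congr rfl fun i _ => sum_choose2 l hl t i, ← Finset.mul_sum,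
          ← Finset.sum_mul]
        have hp : (∑ j, t j) * (∑ j, t j) ^ (l - 2) = (∑ j, t j) ^ (l - 1) := by
          rw [← pow_succ']
          congr 1
          omega
        rw [hp]

lemma bern_mul {n : ℕ} (l m : ℕ) (β γ : Fin (n+1) → ℕ) (x : Fin n → ℝ) :
    bern n l β x * bern n m γ x
      = ((∏ i, ((β i + γ i).choose (β i)) : ℕ) : ℝ) / (((l+m).choose l : ℕ) : ℝ)
        * bern n (l+m) (β+γ) x := by
  unfold bern
  have hc : ((∏ i, ((β i + γ i).choose (β i)) : ℕ) : ℝ)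
      = ∏ i, (((β i + γ i).factorial : ℝ) / (((β i).factorial : ℝ) * ((γ i).factorial : ℝ))) := by
    push_cast
    refine Finset.prod_congr rfl fun i _ => ?_
    rw [Nat.cast_choose ℝ (Nat.le_add_right (β i) (γ i))]
    congr 2
    · simp
  have hck : (((l+m).choose l : ℕ) : ℝ)
      = ((l+m).factorial : ℝ) / ((l.factorial : ℝ) * (m.factorial : ℝ)) := by
    rw [Nat.cast_choose ℝ (Nat.le_add_right l m)]
    congr 2
    simp
  have hx : (∏ i : Fin n, x i ^ β i.succ) * (∏ i : Fin n, x i ^ γ i.succ)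
      = ∏ i : Fin n, x i ^ (β + γ) i.succ := by
    rw [← Finset.prod_mul_distrib]
    exact Finset.prod_congr rfl fun i _ => by rw [Pi.add_apply, pow_add]
  have hs : (1 - ∑ i, x i) ^ β 0 * (1 - ∑ i, x i) ^ γ 0
      = (1 - ∑ i, x i) ^ (β + γ) 0 := by rw [Pi.add_apply, pow_add]
  have hFβγ : (∏ i, (((β + γ) i).factorial : ℝ))
      = ∏ i, ((β i + γ i).factorial : ℝ) := by
    exact Finset.prod_congr rfl fun i _ => rfl
  have hprod : ∏ i, (((β i + γ i).factorial : ℝ) / (((β i).factorial : ℝ) * ((γ i).factorial : ℝ)))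
      = (∏ i, ((β i + γ i).factorial : ℝ))
        / ((∏ i, ((β i).factorial : ℝ)) * (∏ i, ((γ i).factorial : ℝ))) := by
    rw [Finset.prod_div_distrib, Finset.prod_mul_distrib]
  rw [hc, hck, hprod, hFβγ]
  have h1 : 0 < (∏ i, ((β i).factorial : ℝ)) := prod_factorial_pos β
  have h2 : 0 < (∏ i, ((γ i).factorial : ℝ)) := prod_factorial_pos γ
  have h3 : 0 < (∏ i, ((β i + γ i).factorial : ℝ)) :=
    Finset.prod_pos fun i _ => by exact_mod_cast (β i + γ i).factorial_pos
  have h4 : ((l+m).factorial : ℝ) ≠ 0 := by exact_mod_cast (l+m).factorial_ne_zero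
  have h5 : (l.factorial : ℝ) ≠ 0 := by exact_mod_cast l.factorial_ne_zero
  have h6 : (m.factorial : ℝ) ≠ 0 := by exact_mod_cast m.factorial_ne_zero
  rw [← hx, ← hs]
  field_simp

lemma elev_single {n : ℕ} (l k : ℕ) (hlk : l ≤ k) (β : Fin (n+1) → ℕ)
    (hβ : β ∈ multIdx n l) (x : Fin n → ℝ) :
    ∑ α ∈ multIdx n k, ((∏ i, ((α i).choose (β i)) : ℕ) : ℝ) / ((k.choose l : ℕ) : ℝ)
        * bern n k α x
      = bern n l β x := by
  have himg : (multIdx n (k-l)).image (β + ·) ⊆ multIdx n k := by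
    intro α hα
    obtain ⟨γ, hγ, rfl⟩ := Finset.mem_image.mp hα
    rw [mem_multIdx]
    simp only [Pi.add_apply]
    rw [Finset.sum_add_distrib, mem_multIdx.mp hβ, mem_multIdx.mp hγ]
    omega
  have hzero : ∀ α ∈ multIdx n k, α ∉ (multIdx n (k-l)).image (β + ·) →
      ((∏ i, ((α i).choose (β i)) : ℕ) : ℝ) / ((k.choose l : ℕ) : ℝ) * bern n k α x = 0 := by
    intro α hα hαn
    have : ∃ i, α i < β i := by
      by_contra h
      push_neg at h
      apply hαn
      refine Finset.mem_image.mpr ⟨α - β, ?_, ?_⟩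
      · rw [mem_multIdx]
        simp only [Pi.sub_apply]
        have hsum : (∑ i, (α i - β i)) + ∑ i, β i = ∑ i, α i := by
          rw [← Finset.sum_add_distrib]
          exact Finset.sum_congr rfl fun i _ => by
            have := h i; omega
        have h1 := mem_multIdx.mp hα
        have h2 := mem_multIdx.mp hβ
        omega
      · funext i
        simp only [Pi.add_apply, Pi.sub_apply]
        have := h i; omega
    obtain ⟨i, hi⟩ := this
    have : ∏ j, ((α j).choose (β j)) = 0 :=
      Finset.prod_eq_zero (mem_univ i) (Nat.choose_eq_zero_of_lt hi)
    rw [this]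
    simp
  rw [← Finset.sum_subset himg hzero, Finset.sum_image (fun a _ b _ h => by
    simpa using congrArg (· - β) h)]
  have hterm : ∀ γ ∈ multIdx n (k-l),
      ((∏ i, (((β + γ) i).choose (β i)) : ℕ) : ℝ) / ((k.choose l : ℕ) : ℝ)
          * bern n k (β + γ) x
        = bern n l β x * bern n (k-l) γ x := by
    intro γ hγ
    have hkl : l + (k - l) = k := by omega
    have := bern_mul l (k-l) β γ x
    rw [hkl] at this
    rw [this]
    rfl
  rw [Finset.sum_congr rfl hterm, ← Finset.mul_sum, bern_sum, mul_one]

lemma elevation {n : ℕ} (l k : ℕ) (hlk : l ≤ k) (bl : (Fin (n+1) → ℕ) → ℝ) (x : Fin n → ℝ) :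
    ∑ β ∈ multIdx n l, bl β * bern n l β x
      = ∑ α ∈ multIdx n k,
          (∑ β ∈ multIdx n l,
            bl β * (((∏ i, ((α i).choose (β i)) : ℕ) : ℝ) / ((k.choose l : ℕ) : ℝ)))
          * bern n k α x := by
  have : ∀ α ∈ multIdx n k,
      (∑ β ∈ multIdx n l,
        bl β * (((∏ i, ((α i).choose (β i)) : ℕ) : ℝ) / ((k.choose l : ℕ) : ℝ))) * bern n k α x
      = ∑ β ∈ multIdx n l,
          bl β * (((∏ i, ((α i).choose (β i)) : ℕ) : ℝ) / ((k.choose l : ℕ) : ℝ)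
            * bern n k α x) := by
    intro α _
    rw [Finset.sum_mul]
    exact Finset.sum_congr rfl fun β _ => by ring
  rw [Finset.sum_congr rfl this, Finset.sum_comm]
  refine Finset.sum_congr rfl fun β hβ => ?_
  rw [← Finset.mul_sum, elev_single l k hlk β hβ x]

lemma tail_inj {n k : ℕ} {α β : Fin (n+1) → ℕ} (hα : α ∈ multIdx n k) (hβ : β ∈ multIdx n k)
    (h : (fun i : Fin n => α i.succ) = fun i : Fin n => β i.succ) : α = β := by
  have h0 : α 0 = β 0 := by
    have h1 := mem_multIdx.mp hα
    have h2 := mem_multIdx.mp hβ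
    rw [Fin.sum_univ_succ] at h1 h2
    have : ∑ i : Fin n, α i.succ = ∑ i : Fin n, β i.succ := by
      exact Finset.sum_congr rfl fun i _ => congrFun h i
    omega
  funext j
  refine Fin.cases ?_ ?_ j
  · exact h0
  · intro i; exact congrFun h i

lemma dense_compl_hyperplane {n : ℕ} (hn : 1 ≤ n) :
    Dense {y : Fin n → ℝ | 1 + ∑ i, y i ≠ 0} := by
  intro y
  by_cases hy : 1 + ∑ i, y i ≠ 0
  · exact subset_closure hy
  · push_neg at hy
    have htend : Filter.Tendsto (fun m : ℕ => y + (1/(m+1) : ℝ) • (fun _ => 1 : Fin n → ℝ))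
        Filter.atTop (nhds y) := by
      have h0 : Filter.Tendsto (fun m : ℕ => (1/(m+1) : ℝ)) Filter.atTop (nhds 0) :=
        tendsto_one_div_add_atTop_nhds_zero_nat
      have := (h0.smul_const (fun _ => 1 : Fin n → ℝ))
      have h2 := (tendsto_const_nhds (x := y) (f := Filter.atTop (α := ℕ))).add this
      simpa using h2
    refine mem_closure_of_tendsto htend (Filter.Eventually.of_forall fun m => ?_)
    show 1 + ∑ i, (y + (1/(m+1) : ℝ) • (fun _ => 1 : Fin n → ℝ)) i ≠ 0
    have : ∑ i, (y + (1/(m+1) : ℝ) • (fun _ => 1 : Fin n → ℝ)) i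
        = (∑ i, y i) + n * (1/(m+1) : ℝ) := by
      simp only [Pi.add_apply, Pi.smul_apply, smul_eq_mul, mul_one]
      rw [Finset.sum_add_distrib, Finset.sum_const, card_univ]
      simp [nsmul_eq_mul, Fintype.card_fin]
    rw [this]
    have : (1 : ℝ) + ((∑ i, y i) + n * (1/(m+1) : ℝ)) = n * (1/(m+1)) := by
      rw [← add_assoc]
      nlinarith [hy]
    rw [this]
    positivity

lemma bern_indep {n k : ℕ} (hn : 1 ≤ n) (c : (Fin (n+1) → ℕ) → ℝ)
    (hc : ∀ x : Fin n → ℝ, ∑ α ∈ multIdx n k, c α * bern n k α x = 0) :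
    ∀ α ∈ multIdx n k, c α = 0 := by
  set m : (Fin (n+1) → ℕ) → ℝ :=
    fun α => (k.factorial : ℝ) / ∏ i, ((α i).factorial : ℝ) with hm
  set g : (Fin n → ℝ) → ℝ :=
    fun y => ∑ α ∈ multIdx n k, c α * m α * ∏ i : Fin n, y i ^ α i.succ with hg
  -- Step 1: g vanishes away from the hyperplane
  have hg0 : ∀ y : Fin n → ℝ, 1 + ∑ i, y i ≠ 0 → g y = 0 := by
    intro y hS
    set S : ℝ := 1 + ∑ i, y i with hSdef
    set x : Fin n → ℝ := fun i => y i / S with hx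
    have hsx : 1 - ∑ i, x i = 1/S := by
      rw [hx]
      have : ∑ i, y i / S = (∑ i, y i) / S := by rw [← Finset.sum_div]
      rw [this]
      field_simp
      rw [hSdef]; ring
    have hbx : ∀ α ∈ multIdx n k, bern n k α x
        = m α * (∏ i : Fin n, y i ^ α i.succ) * (S⁻¹)^k := by
      intro α hα
      rw [bern, hsx]
      have h1 : ∀ i : Fin n, x i ^ α i.succ = y i ^ α i.succ * (S⁻¹) ^ α i.succ := by
        intro i
        have hxi : x i = y i * S⁻¹ := by rw [hx]; simp [div_eq_mul_inv]
        rw [hxi, mul_pow]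
      rw [Finset.prod_congr rfl fun i _ => h1 i, Finset.prod_mul_distrib]
      rw [Finset.prod_pow_eq_pow_sum]
      rw [one_div]
      have hks : (∑ i : Fin n, α i.succ) + α 0 = k := by
        have := mem_multIdx.mp hα
        rw [Fin.sum_univ_succ] at this
        omega
      have hmα : m α = (k.factorial : ℝ) / ∏ i, ((α i).factorial : ℝ) := rfl
      have hSk : (S⁻¹ : ℝ)^k = (S⁻¹)^(∑ i : Fin n, α i.succ) * (S⁻¹)^(α 0) := by
        rw [← pow_add, hks]
      rw [hmα, hSk]
      ring
    have := hc x
    rw [Finset.sum_congr rfl fun α hα => by rw [hbx α hα]] at this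
    have hsum : ∑ α ∈ multIdx n k, c α * (m α * (∏ i : Fin n, y i ^ α i.succ) * (S⁻¹)^k)
        = g y * (S⁻¹)^k := by
      rw [hg, Finset.sum_mul]
      exact Finset.sum_congr rfl fun α _ => by ring
    rw [hsum] at this
    have hSne : (S⁻¹ : ℝ) ^ k ≠ 0 := pow_ne_zero _ (inv_ne_zero hS)
    exact (mul_eq_zero.mp this).resolve_right hSne
  -- Step 2: g vanishes everywhere
  have hgc : Continuous g := by
    apply continuous_finset_sum
    intro α _
    exact (continuous_const.mul (continuous_finset_prod _ fun i _ =>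
      (continuous_apply i).pow _))
  have hgall : ∀ y, g y = 0 := by
    have := Continuous.ext_on (dense_compl_hyperplane hn) hgc continuous_const
      (fun y hy => hg0 y hy)
    exact fun y => congrFun this y
  -- Step 3: extract coefficients via MvPolynomial
  set P : MvPolynomial (Fin n) ℝ :=
    ∑ α ∈ multIdx n k, MvPolynomial.monomial
      (Finsupp.equivFunOnFinite.symm fun i : Fin n => α i.succ) (c α * m α) with hP
  have hevalP : ∀ y, MvPolynomial.eval y P = g y := by
    intro y
    rw [hP, MvPolynomial.eval_sum]
    refine Finset.sum_congr rfl fun α _ => ?_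
    rw [MvPolynomial.eval_monomial]
    congr 1
    rw [Finsupp.prod_fintype]
    · exact Finset.prod_congr rfl fun i _ => by simp
    · intro i; exact pow_zero _
  have hPzero : P = 0 := by
    apply MvPolynomial.funext
    intro y
    rw [hevalP, hgall]
    simp
  intro α hα
  have hcoeff : MvPolynomial.coeff (Finsupp.equivFunOnFinite.symm fun i : Fin n => α i.succ) P
      = c α * m α := by
    rw [hP, MvPolynomial.coeff_sum]
    rw [Finset.sum_eq_single α]
    · rw [MvPolynomial.coeff_monomial, if_pos rfl]
    · intro β hβ hne
      rw [MvPolynomial.coeff_monomial, if_neg]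
      intro h
      apply hne
      apply tail_inj hβ hα
      have := Finsupp.equivFunOnFinite.symm.injective h
      exact this
    · intro h; exact absurd hα h
  rw [hPzero] at hcoeff
  simp only [MvPolynomial.coeff_zero] at hcoeff
  have hmne : m α ≠ 0 := by
    rw [hm]
    have := prod_factorial_pos α
    have : (k.factorial : ℝ) > 0 := by exact_mod_cast k.factorial_pos
    positivity
  rcases mul_eq_zero.mp hcoeff.symm with h | h
  · exact h
  · exact absurd h hmne

lemma bern_continuous (n k : ℕ) (α : Fin (n+1) → ℕ) : Continuous (bern n k α) := by
  unfold bern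
  apply Continuous.mul
  apply Continuous.mul continuous_const
  · exact continuous_finset_prod _ fun i _ => (continuous_apply i).pow _
  · exact ((continuous_const.sub (continuous_finset_sum _ fun i _ => continuous_apply i)).pow _)

lemma stdSimp_isCompact (n : ℕ) : IsCompact (stdSimp n) := by
  have hclosed : IsClosed (stdSimp n) := by
    have : stdSimp n = (⋂ i, {x : Fin n → ℝ | 0 ≤ x i}) ∩ {x : Fin n → ℝ | ∑ i, x i ≤ 1} := by
      ext x; simp [stdSimp, Set.mem_iInter]
    rw [this]
    exact IsClosed.inter (isClosed_iInter fun i =>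
        isClosed_le continuous_const (continuous_apply i))
      (isClosed_le (continuous_finset_sum _ fun i _ => continuous_apply i) continuous_const)
  have hbdd : Bornology.IsBounded (stdSimp n) := by
    apply (Metric.isBounded_closedBall (x := (0 : Fin n → ℝ)) (r := 1)).subset
    intro x hx
    rw [Metric.mem_closedBall]
    rw [dist_pi_le_iff (by norm_num : (0:ℝ) ≤ 1)]
    intro i
    rw [Real.dist_eq]
    simp only [Pi.zero_apply, sub_zero]
    rw [abs_le]
    constructor
    · linarith [hx.1 i]
    · calc x i ≤ ∑ j, x j := Finset.single_le_sum (fun j _ => hx.1 j) (mem_univ i)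
        _ ≤ 1 := hx.2
  exact Metric.isCompact_of_isClosed_isBounded hclosed hbdd

lemma zero_mem_stdSimp (n : ℕ) : (0 : Fin n → ℝ) ∈ stdSimp n := by
  constructor
  · intro i; simp
  · simp


set_option maxHeartbeats 1000000 in
/-- dimension-independent global certificate for rational
functions. -/
theorem stmt17 (n l k : ℕ) (hn : 1 ≤ n) (hl : 2 ≤ l)
    (p q : MvPolynomial (Fin n) ℝ)
    (hdegp : p.totalDegree = l) (hdegq : q.totalDegree = l)
    (bl bk ck : (Fin (n+1) → ℕ) → ℝ)
    (hrepl : ∀ x, MvPolynomial.eval x p = ∑ α ∈ multIdx n l, bl α * bern n l α x)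
    (hrepk : ∀ x, MvPolynomial.eval x p = ∑ α ∈ multIdx n k, bk α * bern n k α x)
    (hrepqk : ∀ x, MvPolynomial.eval x q = ∑ α ∈ multIdx n k, ck α * bern n k α x)
    (hck : ∀ α ∈ multIdx n k, 0 < ck α)
    (hqpos : ∀ x ∈ stdSimp n, 0 < MvPolynomial.eval x q)
    (hfpos : ∀ x ∈ stdSimp n, 0 < MvPolynomial.eval x p / MvPolynomial.eval x q)
    (pmin : ℝ) (hpmin : pmin = sInf ((fun x => MvPolynomial.eval x p) '' stdSimp n))
    (hk : (k : ℝ) > ((l : ℝ) * ((l : ℝ) - 1) / 2) *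
      ((multIdx n l).sup' (multIdx_nonempty n l) (fun α => |bl α|)) / pmin) :
    ∀ α ∈ multIdx n k, 0 < bk α / ck α := by
  set M : ℝ := (multIdx n l).sup' (multIdx_nonempty n l) (fun α => |bl α|) with hM
  have hMb : ∀ β ∈ multIdx n l, |bl β| ≤ M := fun β hβ => by
    rw [hM]; exact Finset.le_sup' (fun α => |bl α|) hβ
  -- positivity of p on the simplex
  have hppos : ∀ x ∈ stdSimp n, 0 < MvPolynomial.eval x p := by
    intro x hx
    have h1 := hfpos x hx
    have h2 := hqpos x hx
    have := mul_pos h1 h2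
    rwa [div_mul_cancel₀] at this
    exact ne_of_gt h2
  -- continuity
  have hcont : Continuous fun x : Fin n → ℝ => MvPolynomial.eval x p := by
    have : (fun x : Fin n → ℝ => MvPolynomial.eval x p)
        = fun x => ∑ α ∈ multIdx n l, bl α * bern n l α x := funext hrepl
    rw [this]
    exact continuous_finset_sum _ fun α _ => continuous_const.mul (bern_continuous n l α)
  -- pmin attained and positive
  have himg : IsCompact ((fun x => MvPolynomial.eval x p) '' stdSimp n) :=
    (stdSimp_isCompact n).image hcont
  have hne : ((fun x => MvPolynomial.eval x p) '' stdSimp n).Nonempty :=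
    ⟨_, Set.mem_image_of_mem _ (zero_mem_stdSimp n)⟩
  have hpm_mem : pmin ∈ (fun x => MvPolynomial.eval x p) '' stdSimp n := by
    rw [hpmin]; exact himg.sInf_mem hne
  obtain ⟨x₀, hx₀Δ, hx₀⟩ := hpm_mem
  have hpminpos : 0 < pmin := by
    have hx₀' : MvPolynomial.eval x₀ p = pmin := hx₀
    linarith [hppos x₀ hx₀Δ]
  have hple : ∀ x ∈ stdSimp n, pmin ≤ MvPolynomial.eval x p := by
    intro x hx
    rw [hpmin]
    exact csInf_le himg.bddBelow (Set.mem_image_of_mem _ hx)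
  -- pmin ≤ M
  have hMp : pmin ≤ M := by
    have h1 : MvPolynomial.eval x₀ p ≤ M := by
      rw [hrepl x₀]
      calc ∑ β ∈ multIdx n l, bl β * bern n l β x₀
          ≤ ∑ β ∈ multIdx n l, M * bern n l β x₀ := by
            apply Finset.sum_le_sum
            intro β hβ
            have hb0 := bern_nonneg β hx₀Δ (k := l)
            calc bl β * bern n l β x₀ ≤ |bl β| * bern n l β x₀ :=
                  mul_le_mul_of_nonneg_right (le_abs_self _) hb0
              _ ≤ M * bern n l β x₀ := mul_le_mul_of_nonneg_right (hMb β hβ) hb0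
        _ = M := by rw [← Finset.mul_sum, bern_sum, mul_one]
    have hx₀' : MvPolynomial.eval x₀ p = pmin := hx₀
    linarith
  have hMpos : 0 < M := lt_of_lt_of_le hpminpos hMp
  -- k * pmin > (l(l-1)/2) * M
  have hkp : ((l : ℝ) * ((l : ℝ) - 1) / 2) * M < (k : ℝ) * pmin := by
    rw [gt_iff_lt, div_lt_iff₀ hpminpos] at hk
    linarith
  have hl2 : (2 : ℝ) ≤ (l : ℝ) := by exact_mod_cast hl
  -- l ≤ k
  have hkl : l ≤ k := by
    by_contra h
    push_neg at h
    have hkr : (k : ℝ) ≤ (l : ℝ) - 1 := by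
      have : (k : ℝ) + 1 ≤ (l : ℝ) := by exact_mod_cast h
      linarith
    have h1 : (k : ℝ) * pmin ≤ ((l : ℝ) - 1) * pmin :=
      mul_le_mul_of_nonneg_right hkr hpminpos.le
    have h2 : ((l : ℝ) - 1) * pmin ≤ ((l : ℝ) - 1) * M :=
      mul_le_mul_of_nonneg_left hMp (by linarith)
    have h3 : ((l : ℝ) - 1) * M ≤ ((l : ℝ) * ((l : ℝ) - 1) / 2) * M := by
      apply mul_le_mul_of_nonneg_right _ hMpos.le
      nlinarith
    linarith
  have hk0 : 0 < k := by omega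
  have hk0r : (0 : ℝ) < (k : ℝ) := by exact_mod_cast hk0
  -- identify bk with the elevated coefficients
  set g : (Fin (n+1) → ℕ) → ℝ :=
    fun α => ∑ β ∈ multIdx n l,
      bl β * (((∏ i, ((α i).choose (β i)) : ℕ) : ℝ) / ((k.choose l : ℕ) : ℝ)) with hg
  have hrepg : ∀ x, MvPolynomial.eval x p = ∑ α ∈ multIdx n k, g α * bern n k α x :=
    fun x => (hrepl x).trans (elevation l k hkl bl x)
  have hbkg : ∀ α ∈ multIdx n k, bk α = g α := by
    have hind := bern_indep (k := k) hn (fun α => bk α - g α) ?_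
    · intro α hα
      have := hind α hα
      linarith
    · intro x
      simp only [sub_mul]
      rw [Finset.sum_sub_distrib, ← hrepk x, ← hrepg x, sub_self]
  -- main bound
  intro α hα
  apply div_pos _ (hck α hα)
  rw [hbkg α hα]
  -- the grid point
  set xα : Fin n → ℝ := fun i => (α i.succ : ℝ) / k with hxα
  have hsumα : ∑ i, α i = k := mem_multIdx.mp hα
  have hsum_tail : (∑ i : Fin n, (α i.succ : ℝ)) = (k : ℝ) - (α 0 : ℝ) := by
    rw [Fin.sum_univ_succ] at hsumα
    have h : (α 0 : ℝ) + ∑ i : Fin n, (α i.succ : ℝ) = (k : ℝ) := by exact_mod_cast hsumα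
    linarith
  -- Bernstein polynomials at the grid point
  have hklr : ((k:ℝ)^l) ≠ 0 := pow_ne_zero _ (ne_of_gt hk0r)
  have hbern_grid : ∀ β ∈ multIdx n l, bern n l β xα
      = (Nat.multinomial univ β : ℝ) * ((∏ i, (α i : ℝ) ^ β i) / (k : ℝ) ^ l) := by
    intro β hβ
    rw [bern_eq β xα hβ]
    have hz : ∀ i : Fin (n+1),
        (Fin.cons (1 - ∑ j, xα j) xα : Fin (n+1) → ℝ) i = (α i : ℝ) / k := by
      intro i
      refine Fin.cases ?_ ?_ i
      · rw [Fin.cons_zero]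
        have hsx : ∑ j, xα j = ((k:ℝ) - (α 0 : ℝ))/k := by
          simp only [hxα]
          rw [← Finset.sum_div, hsum_tail]
        rw [hsx]
        field_simp
        ring
      · intro i
        rw [Fin.cons_succ]
    have hprodz : ∏ i, (Fin.cons (1 - ∑ j, xα j) xα : Fin (n+1) → ℝ) i ^ β i
        = (∏ i, (α i:ℝ)^β i) / (k:ℝ)^l := by
      rw [Finset.prod_congr rfl (fun i _ => by rw [hz i])]
      rw [Finset.prod_congr rfl (fun i (_ : i ∈ univ) => div_pow ((α i : ℝ)) (k:ℝ) (β i)),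
        Finset.prod_div_distrib, Finset.prod_pow_eq_pow_sum, mem_multIdx.mp hβ]
    rw [hprodz]
  -- the grid point lies in the simplex
  have hxαΔ : xα ∈ stdSimp n := by
    constructor
    · intro i
      simp only [hxα]
      positivity
    · simp only [hxα]
      have h1 : ∑ i : Fin n, (α i.succ : ℝ)/k = ((k:ℝ) - (α 0 : ℝ))/k := by
        rw [← Finset.sum_div, hsum_tail]
      rw [h1, div_le_one hk0r]
      have : (0:ℝ) ≤ (α 0 : ℝ) := by positivity
      linarith
  -- descending factorial denominator is positive
  have hdesc_pos : (0:ℝ) < ((k.descFactorial l : ℕ) : ℝ) := by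
    have hne0 : k.descFactorial l ≠ 0 := by
      rw [Ne, Nat.descFactorial_eq_zero_iff_lt]
      omega
    exact_mod_cast Nat.pos_of_ne_zero hne0
  -- rewrite the elevation weights with descending factorials
  have hθ : ∀ β ∈ multIdx n l,
      (((∏ i, ((α i).choose (β i)) : ℕ) : ℝ) / ((k.choose l : ℕ) : ℝ))
      = (Nat.multinomial univ β : ℝ) * (∏ i, (((α i).descFactorial (β i) : ℕ) : ℝ))
        / ((k.descFactorial l : ℕ) : ℝ) := by
    intro β hβ
    have h1 : ((∏ i, ((α i).choose (β i)) : ℕ) : ℝ)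
        = (∏ i, (((α i).descFactorial (β i) : ℕ) : ℝ)) / (∏ i, ((β i).factorial : ℝ)) := by
      push_cast
      rw [← Finset.prod_div_distrib]
      refine Finset.prod_congr rfl fun i _ => ?_
      have hcast : (((α i).descFactorial (β i) : ℕ) : ℝ)
          = ((β i).factorial : ℝ) * (((α i).choose (β i) : ℕ) : ℝ) := by
        exact_mod_cast Nat.descFactorial_eq_factorial_mul_choose (α i) (β i)
      rw [hcast]
      have : ((β i).factorial : ℝ) ≠ 0 := by exact_mod_cast (β i).factorial_ne_zero
      field_simp
    have h2 : ((k.choose l : ℕ) : ℝ) = ((k.descFactorial l : ℕ) : ℝ) / (l.factorial : ℝ) := by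
      have hcast : ((k.descFactorial l : ℕ) : ℝ)
          = (l.factorial : ℝ) * ((k.choose l : ℕ) : ℝ) := by
        exact_mod_cast Nat.descFactorial_eq_factorial_mul_choose k l
      rw [hcast]
      have : (l.factorial : ℝ) ≠ 0 := by exact_mod_cast l.factorial_ne_zero
      field_simp
    rw [h1, h2, multinomial_cast β (mem_multIdx.mp hβ)]
    have hfl : (l.factorial : ℝ) ≠ 0 := by exact_mod_cast l.factorial_ne_zero
    have hfp : (∏ i, ((β i).factorial : ℝ)) ≠ 0 := ne_of_gt (prod_factorial_pos β)
    field_simp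
  -- the two key sums
  set SP : ℝ := ∑ β ∈ multIdx n l,
    bl β * ((Nat.multinomial univ β : ℝ) * ∏ i, (α i:ℝ)^β i) with hSP
  set SD : ℝ := ∑ β ∈ multIdx n l,
    bl β * ((Nat.multinomial univ β : ℝ) * ∏ i, (((α i).descFactorial (β i) : ℕ) : ℝ)) with hSD
  have hgα : g α = SD / ((k.descFactorial l : ℕ) : ℝ) := by
    simp only [hg]
    have h1 : ∑ β ∈ multIdx n l,
        bl β * (((∏ i, ((α i).choose (β i)) : ℕ) : ℝ) / ((k.choose l : ℕ) : ℝ))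
        = ∑ β ∈ multIdx n l, bl β * ((Nat.multinomial univ β : ℝ)
            * (∏ i, (((α i).descFactorial (β i) : ℕ) : ℝ)) / ((k.descFactorial l : ℕ) : ℝ)) :=
      Finset.sum_congr rfl fun β hβ => by rw [hθ β hβ]
    rw [h1, hSD, Finset.sum_div]
    exact Finset.sum_congr rfl fun β _ => by ring
  have hSPp : SP = (k:ℝ)^l * MvPolynomial.eval xα p := by
    rw [hrepl xα, Finset.mul_sum, hSP]
    refine Finset.sum_congr rfl fun β hβ => ?_
    rw [hbern_grid β hβ]
    field_simp
  -- cast of the key combinatorial estimate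
  have hkn := key_nat l hl α
  rw [hsumα] at hkn
  have hknR : (∑ β ∈ multIdx n l, (Nat.multinomial univ β : ℝ) * ∏ i, (α i:ℝ)^β i)
      ≤ (∑ β ∈ multIdx n l,
          (Nat.multinomial univ β : ℝ) * ∏ i, (((α i).descFactorial (β i) : ℕ) : ℝ))
        + ((l.choose 2 : ℕ):ℝ) * (k:ℝ)^(l-1) := by
    exact_mod_cast hkn
  have hkeyR : SP - SD ≤ M * (((l.choose 2 : ℕ) : ℝ) * (k:ℝ)^(l-1)) := by
    have h1 : SP - SD = ∑ β ∈ multIdx n l, bl β * ((Nat.multinomial univ β : ℝ) *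
        ((∏ i, (α i:ℝ)^β i) - ∏ i, (((α i).descFactorial (β i) : ℕ) : ℝ))) := by
      rw [hSP, hSD, ← Finset.sum_sub_distrib]
      exact Finset.sum_congr rfl fun β _ => by ring
    have h3 : ∑ β ∈ multIdx n l, (Nat.multinomial univ β : ℝ) *
        ((∏ i, (α i:ℝ)^β i) - ∏ i, (((α i).descFactorial (β i) : ℕ) : ℝ))
        ≤ ((l.choose 2 : ℕ):ℝ) * (k:ℝ)^(l-1) := by
      have : ∑ β ∈ multIdx n l, (Nat.multinomial univ β : ℝ) *
          ((∏ i, (α i:ℝ)^β i) - ∏ i, (((α i).descFactorial (β i) : ℕ) : ℝ))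
          = (∑ β ∈ multIdx n l, (Nat.multinomial univ β : ℝ) * ∏ i, (α i:ℝ)^β i)
            - ∑ β ∈ multIdx n l,
              (Nat.multinomial univ β : ℝ) * ∏ i, (((α i).descFactorial (β i) : ℕ) : ℝ) := by
        rw [← Finset.sum_sub_distrib]
        exact Finset.sum_congr rfl fun β _ => by ring
      rw [this]
      linarith
    have h2 : ∀ β ∈ multIdx n l, bl β * ((Nat.multinomial univ β : ℝ) *
        ((∏ i, (α i:ℝ)^β i) - ∏ i, (((α i).descFactorial (β i) : ℕ) : ℝ)))
        ≤ M * ((Nat.multinomial univ β : ℝ) *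
        ((∏ i, (α i:ℝ)^β i) - ∏ i, (((α i).descFactorial (β i) : ℕ) : ℝ))) := by
      intro β hβ
      have hnn : 0 ≤ (Nat.multinomial univ β : ℝ) *
          ((∏ i, (α i:ℝ)^β i) - ∏ i, (((α i).descFactorial (β i) : ℕ) : ℝ)) := by
        apply mul_nonneg (by positivity)
        have hd : (∏ i, (α i).descFactorial (β i)) ≤ ∏ i, (α i)^(β i) :=
          Finset.prod_le_prod' fun i _ => Nat.descFactorial_le_pow _ _
        have hdR : (∏ i, (((α i).descFactorial (β i) : ℕ) : ℝ)) ≤ ∏ i, (α i:ℝ)^β i := by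
          exact_mod_cast hd
        linarith
      exact mul_le_mul_of_nonneg_right ((le_abs_self _).trans (hMb β hβ)) hnn
    calc SP - SD
        = ∑ β ∈ multIdx n l, bl β * ((Nat.multinomial univ β : ℝ) *
            ((∏ i, (α i:ℝ)^β i) - ∏ i, (((α i).descFactorial (β i) : ℕ) : ℝ))) := h1
      _ ≤ ∑ β ∈ multIdx n l, M * ((Nat.multinomial univ β : ℝ) *
            ((∏ i, (α i:ℝ)^β i) - ∏ i, (((α i).descFactorial (β i) : ℕ) : ℝ))) :=
          Finset.sum_le_sum h2
      _ = M * ∑ β ∈ multIdx n l, (Nat.multinomial univ β : ℝ) *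
            ((∏ i, (α i:ℝ)^β i) - ∏ i, (((α i).descFactorial (β i) : ℕ) : ℝ)) := by
          rw [Finset.mul_sum]
      _ ≤ M * (((l.choose 2 : ℕ):ℝ) * (k:ℝ)^(l-1)) :=
          mul_le_mul_of_nonneg_left h3 hMpos.le
  -- conclude
  have hSPge : (k:ℝ)^l * pmin ≤ SP := by
    rw [hSPp]
    exact mul_le_mul_of_nonneg_left (hple xα hxαΔ) (by positivity)
  have hcast2 : ((l.choose 2 : ℕ):ℝ) = (l:ℝ)*((l:ℝ)-1)/2 := by
    rw [Nat.cast_choose_two]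
  clear_value M g xα SP SD
  have hpowsplit : (k:ℝ)^l = (k:ℝ)^(l-1) * k := by
    have h1 : l - 1 + 1 = l := Nat.sub_add_cancel (le_trans one_le_two hl)
    calc (k:ℝ)^l = (k:ℝ)^(l-1+1) := by rw [h1]
      _ = (k:ℝ)^(l-1) * k := pow_succ _ _
  have hnum : 0 < (k:ℝ)^l * pmin - M * (((l.choose 2 : ℕ):ℝ) * (k:ℝ)^(l-1)) := by
    have hkpos' : (0:ℝ) < (k:ℝ)^(l-1) := by positivity
    have h2 : (k:ℝ)^l * pmin = (k:ℝ)^(l-1) * ((k:ℝ) * pmin) := by rw [hpowsplit]; ring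
    have h3 : M * (((l.choose 2 : ℕ):ℝ) * (k:ℝ)^(l-1))
        = (k:ℝ)^(l-1) * (((l:ℝ)*((l:ℝ)-1)/2) * M) := by rw [hcast2]; ring
    rw [h2, h3, ← mul_sub]
    exact mul_pos hkpos' (by linarith [hkp])
  rw [hgα]
  apply div_pos _ hdesc_pos
  linarith
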